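/- arXiv:1607.08717 — 2 statements merged into one kernel-verified Lean document; each statement's English description precedes it below -/
import Mathlib

section
/- Let D := {(x̄, x̃) ∈ ℝ² : x̃ ≥ x̄²}. Let b(x̄, x̃) = (b̄⁰ + b̄¹x̄ + b̄²x̃, b̃⁰ + b̃¹x̄ + b̃²x̃) be affine and let C : ℝ² → S² be affine, C(x̄, x̃) = A⁰ + A¹x̄ + A²x̃ with A⁰, A¹, A² ∈ S². Then the following are equivalent. (I) C(x) is positive semidefinite for every x ∈ D, and for every x̄ ∈ ℝ, with x := (x̄, x̄²) and w := (−2x̄, 1): C(x)w = 0 and ⟨w, b(x)⟩ − (𝟙_{C₁₁(x) ≠ 0} / (2(1 + 4x̄²))) · ( −2x̄ ∂_w(C₁₁ − C₂₂)(x) + (1 − 4x̄²) ∂_w C₁₂(x) ) ≥ 0, where ∂_w := ∂₁ + 2x̄ ∂₂. (II) There exists α ≥ 0 such that C(x̄, x̃) = α·[[1, 2x̄], [2x̄, 4x̃]] for all (x̄, x̃) ∈ ℝ², b̄² = 0, and either [b̃² > 2b̄¹ and (b̃¹ − 2b̄⁰)² ≤ 4(b̃² − 2b̄¹)(b̃⁰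 − α)] or [b̃² = 2b̄¹, b̃¹ = 2b̄⁰ and b̃⁰ ≥ α]. -/
open Matrix Set Asymptotics
open scoped RealInnerProductSpace NNReal

noncomputable section

/-- `ℝ^d` with the Euclidean inner product and norm. -/
abbrev Vec (d : ℕ) := EuclideanSpace ℝ (Fin d)

/-- real `d × d` matrices. -/
abbrev Mat (d : ℕ) := Matrix (Fin d) (Fin d) ℝ

attribute [local instance] Matrix.normedAddCommGroup Matrix.normedSpace

/-- A matrix acting on a vector of `ℝ^d`. -/
def mv {d : ℕ} (A : Mat d) (u : Vec d) : Vec d := WithLp.toLp 2 (A.mulVec u)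

/-- The `j`-th canonical basis vector of `ℝ^d`. -/
def evec {d : ℕ} (j : Fin d) : Vec d := EuclideanSpace.single j 1

/-- The first-order normal cone `N¹_D(x)`. -/
def normalCone1 {d : ℕ} (D : Set (Vec d)) (x : Vec d) : Set (Vec d) :=
  {u | ∀ ε > (0:ℝ), ∃ δ > (0:ℝ), ∀ y ∈ D, ‖y - x‖ ≤ δ → ⟪u, y - x⟫ ≤ ε * ‖y - x‖}

/-- The second-order normal cone `N²_D(x) ⊆ ℝ^d × S^d`. -/
def normalCone2 {d : ℕ} (D : Set (Vec d)) (x : Vec d) : Set (Vec d × Mat d) :=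
  {p | p.2.IsSymm ∧ ∀ ε > (0:ℝ), ∃ δ > (0:ℝ), ∀ y ∈ D, ‖y - x‖ ≤ δ →
    ⟪p.1, y - x⟫ + (1/2:ℝ) * ⟪y - x, mv p.2 (y - x)⟫ ≤ ε * ‖y - x‖^2}

/-- The first-order normal cone for subsets of `ℝ`. -/
def normalConeR (D : Set ℝ) (x : ℝ) : Set ℝ :=
  {u | ∀ ε > (0:ℝ), ∃ δ > (0:ℝ), ∀ y ∈ D, |y - x| ≤ δ → u * (y - x) ≤ ε * |y - x|}

/-- The matrix of the orthogonal projection of `ℝ^d` onto the column space (range) of `A`,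
i.e. `A A⁺` with `A⁺` the Moore–Penrose pseudoinverse. -/
def projRange {d : ℕ} (A : Mat d) : Mat d :=
  Matrix.toEuclideanLin.symm
    (((LinearMap.range (Matrix.toEuclideanLin A)).subtypeL.comp
      (Submodule.orthogonalProjection (LinearMap.range (Matrix.toEuclideanLin A)))).toLinearMap)

/-- The element of `ℝ²` with the two given coordinates. -/
def vec2 (a b : ℝ) : Vec 2 := WithLp.toLp 2 ![a, b]

/-- The Hessian matrix of `φ : ℝ^d → ℝ` at `x`. -/
def hessMat {d : ℕ} (φ : Vec d → ℝ) (x : Vec d) : Mat d :=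
  Matrix.of fun i j => fderiv ℝ (fun y => fderiv ℝ φ y (evec j)) x (evec i)

/-! ### Auxiliary lemmas -/

private lemma stmt9_exists_t (K M : ℝ) (hK : 0 < K) : ∃ t : ℝ, 1 ≤ t ∧ M + 1 ≤ K * t := by
  refine ⟨max 1 ((M + 1)/K), le_max_left _ _, ?_⟩
  calc M + 1 = K * ((M + 1)/K) := by field_simp
    _ ≤ K * max 1 ((M + 1)/K) := by
        exact mul_le_mul_of_nonneg_left (le_max_right _ _) hK.le

private lemma stmt9_quad_lead (A B C : ℝ) (h : ∀ x : ℝ, 0 ≤ A*x^2 + B*x + C) : 0 ≤ A := by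
  by_contra hA
  push_neg at hA
  obtain ⟨t, ht1, hAt⟩ := stmt9_exists_t (-A) (|B| + |C|) (by linarith)
  have ht0 : (0:ℝ) ≤ t := by linarith
  have hsq : 1 ≤ t^2 := by nlinarith
  have h1 : A * t^2 ≤ -(|B| + |C| + 1) * t := by nlinarith
  have h2 : B * t ≤ |B| * t := by nlinarith [le_abs_self B]
  have h3 : C ≤ |C| * t := by nlinarith [le_abs_self C, abs_nonneg C]
  have := h t
  nlinarith [abs_nonneg B, abs_nonneg C]

private lemma stmt9_cubic_lead (L A B C : ℝ)
    (h : ∀ x : ℝ, 0 ≤ L*x^3 + A*x^2 + B*x + C) : L = 0 := by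
  have key : ∀ L' A' B' C' : ℝ, (∀ x : ℝ, 0 ≤ L'*x^3 + A'*x^2 + B'*x + C') → ¬ L' < 0 := by
    intro L' A' B' C' h' hneg
    obtain ⟨t, ht1, hLt⟩ := stmt9_exists_t (-L') (|A'| + |B'| + |C'|) (by linarith)
    have ht0 : (0:ℝ) ≤ t := by linarith
    have hsq : 1 ≤ t^2 := by nlinarith
    have hsq' : t ≤ t^2 := by nlinarith
    have h1 : L' * t^3 ≤ -(|A'| + |B'| + |C'| + 1) * t^2 := by nlinarith
    have h2 : A' * t^2 ≤ |A'| * t^2 := by nlinarith [le_abs_self A']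
    have h3 : B' * t ≤ |B'| * t^2 := by nlinarith [le_abs_self B', abs_nonneg B']
    have h4 : C' ≤ |C'| * t^2 := by nlinarith [le_abs_self C', abs_nonneg C']
    have := h' t
    nlinarith [le_abs_self C', abs_nonneg C',
      mul_nonneg (abs_nonneg C') (by linarith : (0:ℝ) ≤ t^2 - 1)]
  rcases lt_trichotomy L 0 with hneg | h0 | hpos
  · exact absurd hneg (key L A B C h)
  · exact h0
  · exfalso
    refine key (-L) A (-B) C ?_ (by linarith)
    intro x
    have := h (-x)
    nlinarith

private lemma stmt9_quad_iff (A B C : ℝ) :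
    (∀ x : ℝ, 0 ≤ A*x^2 + B*x + C) ↔
      ((0 < A ∧ B^2 ≤ 4*A*C) ∨ (A = 0 ∧ B = 0 ∧ 0 ≤ C)) := by
  constructor
  · intro h
    have hA := stmt9_quad_lead A B C h
    rcases eq_or_lt_of_le hA with hA0 | hA0
    · right
      refine ⟨hA0.symm, ?_, by have := h 0; linarith⟩
      by_contra hB
      have hB' : B ≠ 0 := hB
      have := h ((-C - 1)/B)
      rw [← hA0] at this
      have hcan : B * ((-C - 1)/B) = -C - 1 := by field_simp
      rw [zero_mul, zero_add, hcan] at this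
      linarith
    · left
      refine ⟨hA0, ?_⟩
      have hd := discrim_le_zero (a := A) (b := B) (c := C) (fun x => by
        have := h x; nlinarith [this])
      rw [discrim] at hd
      linarith
  · rintro (⟨hA, hd⟩ | ⟨hA, hB, hC⟩) x
    · nlinarith [sq_nonneg (2*A*x + B)]
    · rw [hA, hB]; ring_nf; linarith

private lemma stmt9_fderiv_aff (c0 c1 c2 : ℝ) (x : Vec 2) (v : Vec 2) :
    fderiv ℝ (fun y : Vec 2 => c0 + y 0 * c1 + y 1 * c2) x v = v 0 * c1 + v 1 * c2 := by
  have h : HasFDerivAt (fun y : Vec 2 => c0 + y 0 * c1 + y 1 * c2)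
      (c1 • (EuclideanSpace.proj (0:Fin 2) : Vec 2 →L[ℝ] ℝ)
        + c2 • (EuclideanSpace.proj (1:Fin 2) : Vec 2 →L[ℝ] ℝ)) x := by
    have h0 := (EuclideanSpace.proj (0:Fin 2) : Vec 2 →L[ℝ] ℝ).hasFDerivAt (x := x)
    have h1 := (EuclideanSpace.proj (1:Fin 2) : Vec 2 →L[ℝ] ℝ).hasFDerivAt (x := x)
    have := ((hasFDerivAt_const c0 x).add (h0.mul_const c1)).add (h1.mul_const c2)
    rw [zero_add] at this
    exact this
  rw [h.fderiv]
  simp [mul_comm]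

private lemma stmt9_psd_par (α xb xt : ℝ) (hα : 0 ≤ α) (hx : xb^2 ≤ xt) :
    (α • !![1, 2*xb; 2*xb, 4*xt] : Mat 2).PosSemidef := by
  rw [Matrix.posSemidef_iff_dotProduct_mulVec]
  constructor
  · rw [Matrix.IsHermitian]
    ext i j
    fin_cases i <;> fin_cases j <;> simp [Matrix.conjTranspose_apply]
  · intro v
    have hqf : (star v) ⬝ᵥ (α • !![1, 2*xb; 2*xb, 4*xt] : Mat 2).mulVec v
        = α * ((v 0 + 2*xb*v 1)^2 + 4*(xt - xb^2)*(v 1)^2) := by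
      simp [dotProduct, Matrix.mulVec, Fin.sum_univ_two]
      ring
    rw [hqf]
    exact mul_nonneg hα (by nlinarith [sq_nonneg (v 0 + 2*xb*v 1), sq_nonneg (v 1)])

/-- characterization of the invariance conditions for affine diffusions on the
convex parabolic state space `D = {x̃ ≥ x̄²}`. -/
theorem stmt9 (bb0 bb1 bb2 bt0 bt1 bt2 : ℝ) (A0 A1 A2 : Mat 2)
    (hA0 : A0.IsSymm) (hA1 : A1.IsSymm) (hA2 : A2.IsSymm)
    (b : Vec 2 → Vec 2)
    (hb : ∀ p : Vec 2, b p = vec2 (bb0 + bb1 * p 0 + bb2 * p 1) (bt0 + bt1 * p 0 + bt2 * p 1))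
    (C : Vec 2 → Mat 2) (hC : ∀ p : Vec 2, C p = A0 + p 0 • A1 + p 1 • A2)
    (D : Set (Vec 2)) (hD : D = {p : Vec 2 | (p 0)^2 ≤ p 1}) :
    ((∀ p ∈ D, (C p).PosSemidef) ∧
      ∀ xb : ℝ,
        mv (C (vec2 xb (xb^2))) (vec2 (-2*xb) 1) = 0 ∧
        0 ≤ ⟪vec2 (-2*xb) 1, b (vec2 xb (xb^2))⟫ -
          (if C (vec2 xb (xb^2)) 0 0 ≠ 0 then (1:ℝ) else 0) / (2 * (1 + 4*xb^2)) *
            ((-2*xb) *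
              (fderiv ℝ (fun y => C y 0 0 - C y 1 1) (vec2 xb (xb^2)) (evec 0) +
               2*xb * fderiv ℝ (fun y => C y 0 0 - C y 1 1) (vec2 xb (xb^2)) (evec 1)) +
             (1 - 4*xb^2) *
              (fderiv ℝ (fun y => C y 0 1) (vec2 xb (xb^2)) (evec 0) +
               2*xb * fderiv ℝ (fun y => C y 0 1) (vec2 xb (xb^2)) (evec 1))))
    ↔
    (∃ α : ℝ, 0 ≤ α ∧
      (∀ p : Vec 2, C p = α • !![1, 2 * p 0; 2 * p 0, 4 * p 1]) ∧ bb2 = 0 ∧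
      ((2*bb1 < bt2 ∧ (bt1 - 2*bb0)^2 ≤ 4*(bt2 - 2*bb1)*(bt0 - α)) ∨
       (bt2 = 2*bb1 ∧ bt1 = 2*bb0 ∧ α ≤ bt0))) := by
  -- the key simplification of the drift expression, valid whenever `C = α • M`
  have masterkey : ∀ α : ℝ, (∀ p : Vec 2, C p = α • !![1, 2 * p 0; 2 * p 0, 4 * p 1]) →
      ∀ xb : ℝ,
      ⟪vec2 (-2*xb) 1, b (vec2 xb (xb^2))⟫ -
          (if C (vec2 xb (xb^2)) 0 0 ≠ 0 then (1:ℝ) else 0) / (2 * (1 + 4*xb^2)) *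
            ((-2*xb) *
              (fderiv ℝ (fun y => C y 0 0 - C y 1 1) (vec2 xb (xb^2)) (evec 0) +
               2*xb * fderiv ℝ (fun y => C y 0 0 - C y 1 1) (vec2 xb (xb^2)) (evec 1)) +
             (1 - 4*xb^2) *
              (fderiv ℝ (fun y => C y 0 1) (vec2 xb (xb^2)) (evec 0) +
               2*xb * fderiv ℝ (fun y => C y 0 1) (vec2 xb (xb^2)) (evec 1)))
      = (-(2*bb2))*xb^3 + (bt2 - 2*bb1)*xb^2 + (bt1 - 2*bb0)*xb + (bt0 - α) := by
    intro α hCα xb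
    have hf1 : (fun y : Vec 2 => C y 0 0 - C y 1 1)
        = (fun y : Vec 2 => α + y 0 * 0 + y 1 * (-(4*α))) := by
      funext y
      rw [hCα y]
      simp [Matrix.smul_apply]
      ring
    have hf2 : (fun y : Vec 2 => C y 0 1)
        = (fun y : Vec 2 => 0 + y 0 * (2*α) + y 1 * 0) := by
      funext y
      rw [hCα y]
      simp [Matrix.smul_apply]
      ring
    have hind : C (vec2 xb (xb^2)) 0 0 = α := by
      rw [hCα]
      simp [vec2]
    have hev00 : (evec (0:Fin 2)) 0 = 1 := by simp [evec, EuclideanSpace.single_apply]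
    have hev01 : (evec (0:Fin 2)) 1 = 0 := by simp [evec, EuclideanSpace.single_apply]
    have hev10 : (evec (1:Fin 2)) 0 = 0 := by simp [evec, EuclideanSpace.single_apply]
    have hev11 : (evec (1:Fin 2)) 1 = 1 := by simp [evec, EuclideanSpace.single_apply]
    have hinner : ⟪vec2 (-2*xb) 1, b (vec2 xb (xb^2))⟫
        = (-2*xb) * (bb0 + bb1 * xb + bb2 * xb^2) + (bt0 + bt1 * xb + bt2 * xb^2) := by
      rw [hb]
      simp [vec2, PiLp.inner_apply, Fin.sum_univ_two]
      ring
    rw [hf1, hf2, hind, hinner, stmt9_fderiv_aff, stmt9_fderiv_aff, stmt9_fderiv_aff,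
      stmt9_fderiv_aff, hev00, hev01, hev10, hev11]
    have hden : (2 * (1 + 4*xb^2)) ≠ 0 := by positivity
    by_cases hα0 : α = 0
    · subst hα0
      simp
      ring
    · rw [if_pos hα0]
      field_simp
      ring
  constructor
  · rintro ⟨hPSD, hAll⟩
    -- component equations of `C(x)w = 0` along the boundary
    have eq1 : ∀ xb : ℝ,
        (-2*xb)*(A0 0 0 + xb * A1 0 0 + xb^2 * A2 0 0)
          + (A0 0 1 + xb * A1 0 1 + xb^2 * A2 0 1) = 0 := by
      intro xb
      have h := congrArg (fun v : Vec 2 => v 0) ((hAll xb).1)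
      rw [hC] at h
      simp [mv, Matrix.mulVec, dotProduct, Fin.sum_univ_two, Matrix.add_apply,
        Matrix.smul_apply, vec2] at h
      linear_combination h
    have eq2 : ∀ xb : ℝ,
        (-2*xb)*(A0 0 1 + xb * A1 0 1 + xb^2 * A2 0 1)
          + (A0 1 1 + xb * A1 1 1 + xb^2 * A2 1 1) = 0 := by
      intro xb
      have h := congrArg (fun v : Vec 2 => v 1) ((hAll xb).1)
      rw [hC] at h
      simp [mv, Matrix.mulVec, dotProduct, Fin.sum_univ_two, Matrix.add_apply,
        Matrix.smul_apply, vec2] at h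
      have hsym0 : A0 1 0 = A0 0 1 := hA0.apply 0 1
      have hsym1 : A1 1 0 = A1 0 1 := hA1.apply 0 1
      have hsym2 : A2 1 0 = A2 0 1 := hA2.apply 0 1
      linear_combination h + (2*xb) * hsym0 + (2*xb^2) * hsym1 + (2*xb^3) * hsym2
    have p10 := eq1 0
    have p11 := eq1 1
    have p1m := eq1 (-1)
    have p12 := eq1 2
    have p20 := eq2 0
    have p21 := eq2 1
    have p2m := eq2 (-1)
    have p22 := eq2 2
    ring_nf at p10 p11 p1m p12 p20 p21 p2m p22
    have hd : A0 0 1 = 0 := by linarith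
    have hc : A2 0 0 = 0 := by linarith
    have he : A1 0 1 = 2 * A0 0 0 := by linarith
    have hf : A2 0 1 = 2 * A1 0 0 := by linarith
    have hg : A0 1 1 = 0 := by linarith
    have hh : A1 1 1 = 0 := by linarith
    have hfz : A2 0 1 = 0 := by linarith
    have hb1 : A1 0 0 = 0 := by linarith
    have hk : A2 1 1 = 4 * A0 0 0 := by linarith
    set α := A0 0 0 with hαdef
    have hCα : ∀ p : Vec 2, C p = α • !![1, 2 * p 0; 2 * p 0, 4 * p 1] := by
      intro p
      rw [hC]
      ext i j
      fin_cases i <;> fin_cases j <;>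
        simp [Matrix.add_apply, Matrix.smul_apply] <;>
        first
          | (rw [hb1, hc]; ring)
          | (rw [hd, he, hfz]; ring)
          | (rw [hA0.apply 0 1, hA1.apply 0 1, hA2.apply 0 1, hd, he, hfz]; ring)
          | (rw [hg, hh, hk]; ring)
    have hα : 0 ≤ α := by
      have hmem : vec2 0 1 ∈ D := by
        rw [hD]
        simp [vec2]
      have hps := (hPSD _ hmem).dotProduct_mulVec_nonneg (fun i => if i = 0 then 1 else 0)
      rw [hCα] at hps
      simpa [dotProduct, Matrix.mulVec, Fin.sum_univ_two, Matrix.smul_apply,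
        vec2] using hps
    have hq : ∀ x : ℝ, 0 ≤ (-(2*bb2))*x^3 + (bt2 - 2*bb1)*x^2 + (bt1 - 2*bb0)*x
        + (bt0 - α) := by
      intro x
      have h2 := (hAll x).2
      rw [masterkey α hCα x] at h2
      exact h2
    have hlead := stmt9_cubic_lead _ _ _ _ hq
    have hbb2 : bb2 = 0 := by linarith
    have hq' : ∀ x : ℝ, 0 ≤ (bt2 - 2*bb1)*x^2 + (bt1 - 2*bb0)*x + (bt0 - α) := by
      intro x
      have := hq x
      rw [hbb2] at this
      nlinarith [this]
    rcases (stmt9_quad_iff _ _ _).mp hq' with ⟨hApos, hdisc⟩ | ⟨hAz, hBz, hCz⟩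
    · exact ⟨α, hα, hCα, hbb2, Or.inl ⟨by linarith, hdisc⟩⟩
    · exact ⟨α, hα, hCα, hbb2, Or.inr ⟨by linarith, by linarith, by linarith⟩⟩
  · rintro ⟨α, hα, hCα, hbb2, hcase⟩
    refine ⟨?_, fun xb => ⟨?_, ?_⟩⟩
    · intro p hp
      rw [hD] at hp
      rw [hCα p]
      exact stmt9_psd_par α (p 0) (p 1) hα hp
    · ext i
      rw [hCα]
      fin_cases i <;>
        simp [mv, Matrix.mulVec, dotProduct, Fin.sum_univ_two, Matrix.smul_apply,
            vec2] <;>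
        ring
    · rw [masterkey α hCα xb]
      have hq' : ∀ x : ℝ, 0 ≤ (bt2 - 2*bb1)*x^2 + (bt1 - 2*bb0)*x + (bt0 - α) := by
        apply (stmt9_quad_iff _ _ _).mpr
        rcases hcase with ⟨h1, h2⟩ | ⟨h1, h2, h3⟩
        · exact Or.inl ⟨by linarith, h2⟩
        · exact Or.inr ⟨by linarith, by linarith, by linarith⟩
      have := hq' xb
      rw [hbb2]
      nlinarith [this]
end
end

section
/- Let D := [0, 1] ⊆ ℝ, let b(x) = b⁰ + b¹x be affine, and let C : ℝ → ℝ be a polynomial of degree at most 2 with C(x) ≥ 0 for all x ∈ [0, 1]. Then the first-order conditions [for every x ∈ [0,1] and every u ∈ N¹_{[0,1]}(x): C(x)u = 0 and u·(b(x) − ½ C′(x)·𝟙_{C(x) ≠ 0}) ≤ 0] hold if and only if there exist η ≥ 0, κ ≥ 0 and θ ∈ [0, 1] such that C(x) = η² x(1 − x) for all x ∈ ℝ and b(x) = κ(θ − x) for all x ∈ ℝ. -/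
open Matrix Set Asymptotics
open scoped RealInnerProductSpace NNReal

noncomputable section

attribute [local instance] Matrix.normedAddCommGroup Matrix.normedSpace

lemma helper_mem_cone {x u : ℝ} (h : ∀ y ∈ Set.Icc (0:ℝ) 1, u * (y - x) ≤ 0) :
    u ∈ normalConeR (Set.Icc (0:ℝ) 1) x := by
  intro ε hε
  exact ⟨1, one_pos, fun y hy _ => le_trans (h y hy)
    (by positivity)⟩

lemma helper_nonneg {x u : ℝ} (hx : 0 < x) (hx1 : x ≤ 1)
    (hu : u ∈ normalConeR (Set.Icc (0:ℝ) 1) x) : 0 ≤ u := by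
  by_contra h
  push_neg at h
  obtain ⟨δ, hδ, hy⟩ := hu (-u/2) (by linarith)
  have ht0 : 0 < min δ x := lt_min hδ hx
  have h1 : x - min δ x ∈ Set.Icc (0:ℝ) 1 :=
    ⟨by simp [min_le_right δ x], by linarith⟩
  have h2 : |x - min δ x - x| ≤ δ := by
    rw [show x - min δ x - x = -(min δ x) by ring, abs_neg,
      abs_of_pos ht0]
    exact min_le_left δ x
  have := hy _ h1 h2
  rw [show x - min δ x - x = -(min δ x) by ring, abs_neg, abs_of_pos ht0] at this
  nlinarith

lemma helper_nonpos {x u : ℝ} (hx : 0 ≤ x) (hx1 : x < 1)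
    (hu : u ∈ normalConeR (Set.Icc (0:ℝ) 1) x) : u ≤ 0 := by
  by_contra h
  push_neg at h
  obtain ⟨δ, hδ, hy⟩ := hu (u/2) (by linarith)
  have ht0 : 0 < min δ (1 - x) := lt_min hδ (by linarith)
  have h1 : x + min δ (1 - x) ∈ Set.Icc (0:ℝ) 1 :=
    ⟨by linarith, by linarith [min_le_right δ (1 - x)]⟩
  have h2 : |x + min δ (1 - x) - x| ≤ δ := by
    rw [show x + min δ (1-x) - x = min δ (1-x) by ring, abs_of_pos ht0]
    exact min_le_left _ _
  have := hy _ h1 h2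
  rw [show x + min δ (1-x) - x = min δ (1-x) by ring, abs_of_pos ht0] at this
  nlinarith

/-- characterization of the first-order invariance conditions on `[0,1]`
for an affine drift and a quadratic diffusion coefficient: the Jacobi diffusion. -/
theorem stmt17 (b0 b1 : ℝ) (b : ℝ → ℝ) (hb : ∀ x : ℝ, b x = b0 + b1 * x)
    (c0 c1 c2 : ℝ) (C : ℝ → ℝ) (hC : ∀ x : ℝ, C x = c0 + c1 * x + c2 * x^2)
    (hCpos : ∀ x ∈ Set.Icc (0:ℝ) 1, 0 ≤ C x) :
    (∀ x ∈ Set.Icc (0:ℝ) 1, ∀ u ∈ normalConeR (Set.Icc (0:ℝ) 1) x,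
      C x * u = 0 ∧
      u * (b x - (1/2 : ℝ) * deriv C x * (if C x ≠ 0 then (1:ℝ) else 0)) ≤ 0)
    ↔
    (∃ η : ℝ, 0 ≤ η ∧ ∃ κ : ℝ, 0 ≤ κ ∧ ∃ θ ∈ Set.Icc (0:ℝ) 1,
      (∀ x : ℝ, C x = η^2 * (x * (1 - x))) ∧ (∀ x : ℝ, b x = κ * (θ - x))) := by
  constructor
  · intro h
    have hm0 : (-1:ℝ) ∈ normalConeR (Set.Icc (0:ℝ) 1) 0 :=
      helper_mem_cone (fun y hy => by nlinarith [hy.1])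
    have hm1 : (1:ℝ) ∈ normalConeR (Set.Icc (0:ℝ) 1) 1 :=
      helper_mem_cone (fun y hy => by nlinarith [hy.2])
    have h0 := h 0 (by norm_num) (-1) hm0
    have h1 := h 1 (by norm_num) 1 hm1
    have hC0 : C 0 = 0 := by linarith [h0.1]
    have hC1 : C 1 = 0 := by linarith [h1.1]
    have hb0 : 0 ≤ b 0 := by
      have := h0.2
      rw [if_neg (by simp [hC0])] at this
      linarith
    have hb1 : b 1 ≤ 0 := by
      have := h1.2
      rw [if_neg (by simp [hC1])] at this
      linarith
    have hc0 : c0 = 0 := by have := hC 0; simp at this; linarith [hC0]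
    have hc2 : c2 = -c1 := by have := hC 1; rw [hC1] at this; nlinarith
    have hc1 : 0 ≤ c1 := by
      have := hCpos (1/2) (by norm_num)
      rw [hC] at this; nlinarith
    have hb0' : 0 ≤ b0 := by rw [hb] at hb0; linarith
    have hb1' : b0 + b1 ≤ 0 := by rw [hb] at hb1; linarith
    refine ⟨Real.sqrt c1, Real.sqrt_nonneg _, -b1, by linarith, ?_⟩
    have hsq : Real.sqrt c1 ^ 2 = c1 := Real.sq_sqrt hc1
    by_cases hbz : b1 = 0
    · refine ⟨0, by norm_num, fun x => by rw [hC, hsq, hc0, hc2]; ring,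
        fun x => by rw [hb, hbz]; subst hbz; linarith⟩
    · have hb1neg : b1 < 0 := lt_of_le_of_ne (by linarith) hbz
      refine ⟨b0 / (-b1), ⟨div_nonneg hb0' (by linarith), ?_⟩,
        fun x => by rw [hC, hsq, hc0, hc2]; ring, fun x => ?_⟩
      · rw [div_le_one (by linarith)]; linarith
      · have hne : (-b1) ≠ 0 := by intro hc; apply hbz; linarith
        have key : -b1 * (b0 / -b1 - x) = b0 + b1 * x := by field_simp; ring
        rw [hb, key]
  · rintro ⟨η, hη, κ, hκ, θ, hθ, hCf, hbf⟩
    intro x hx u hu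
    have hC0 : C 0 = 0 := by rw [hCf]; ring
    have hC1 : C 1 = 0 := by rw [hCf]; ring
    rcases eq_or_lt_of_le hx.1 with h0 | h0
    · -- x = 0
      rw [← h0]
      have hun : u ≤ 0 := helper_nonpos le_rfl one_pos (by rw [← h0] at hu; exact hu)
      refine ⟨by rw [hC0]; ring, ?_⟩
      rw [if_neg (by simp [hC0]), hbf]
      have : 0 ≤ κ * θ := mul_nonneg hκ hθ.1
      nlinarith
    rcases eq_or_lt_of_le hx.2 with h1 | h1
    · -- x = 1
      rw [h1]
      have hun : 0 ≤ u := helper_nonneg one_pos le_rfl (by rw [h1] at hu; exact hu)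
      refine ⟨by rw [hC1]; ring, ?_⟩
      rw [if_neg (by simp [hC1]), hbf]
      have : κ * (θ - 1) ≤ 0 := mul_nonpos_of_nonneg_of_nonpos hκ (by linarith [hθ.2])
      nlinarith
    · -- interior
      have h1' : u ≤ 0 := helper_nonpos hx.1 h1 hu
      have h2' : 0 ≤ u := helper_nonneg h0 hx.2 hu
      have : u = 0 := le_antisymm h1' h2'
      rw [this]
      constructor <;> simp
end
end
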